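/- Let A and B be bounded self-adjoint operators on a complex Hilbert space with B nonnegative and B ≠ 0. Then the set ℝ \ ⋃_{t∈ℝ} spec(A + tB) is countable. -/

import Mathlib

open TopologicalSpace in
lemma countable_of_discrete_within {X : Type*} [TopologicalSpace X] [SecondCountableTopology X]
    {s : Set X} (h : ∀ x ∈ s, ∃ U : Set X, IsOpen U ∧ x ∈ U ∧ U ∩ s ⊆ {x}) : s.Countable := by
  choose U hUo hxU hU using h
  have h2 : ∀ x (hx : x ∈ s), ∃ V ∈ countableBasis X, x ∈ V ∧ V ⊆ U x hx := fun x hx =>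
    (isBasis_countableBasis X).exists_subset_of_mem_open (hxU x hx) (hUo x hx)
  choose V hVb hxV hVU using h2
  have : Countable {t // t ∈ countableBasis X} := (countable_countableBasis X).to_subtype
  rw [← Set.countable_coe_iff]
  refine Function.Injective.countable
    (f := fun p : s => (⟨V p p.2, hVb p p.2⟩ : {t // t ∈ countableBasis X})) ?_
  rintro ⟨x, hx⟩ ⟨y, hy⟩ hxy
  simp only [Subtype.mk.injEq] at hxy ⊢
  have : y ∈ U x hx := hVU x hx (hxy ▸ hxV y hy)
  exact (hU x hx ⟨this, hy⟩).symm

lemma protected_BRB {H : Type*} [NormedAddCommGroup H] [InnerProductSpace ℂ H] [CompleteSpace H]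
    (A B : H →L[ℂ] H) (hA : IsSelfAdjoint A) (hB : B.IsPositive)
    (l : ℝ) (hl : ∀ t : ℝ, (l : ℂ) ∉ spectrum ℂ (A + (t : ℂ) • B)) :
    B * resolvent A (l:ℂ) * B = 0 := by
  set c : H →L[ℂ] H := algebraMap ℂ (H →L[ℂ] H) (l:ℂ) - A with hc_def
  have hc : IsUnit c := by
    have h0 := hl 0
    rw [spectrum.notMem_iff] at h0
    simpa using h0
  set R : H →L[ℂ] H := Ring.inverse c with hR_def
  have hcR : c * R = 1 := Ring.mul_inverse_cancel c hc
  have hBnn : 0 ≤ B := (ContinuousLinearMap.nonneg_iff_isPositive B).2 hB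
  set s : H →L[ℂ] H := CFC.sqrt B with hs_def
  have hss : s * s = B := CFC.sqrt_mul_sqrt_self B hBnn
  have hs_sa : IsSelfAdjoint s := IsSelfAdjoint.of_nonneg (CFC.sqrt_nonneg B)
  have hc_sa : IsSelfAdjoint c := by
    rw [IsSelfAdjoint, hc_def, star_sub, hA.star_eq, ← algebraMap_star_comm]
    norm_num
  have hR_sa : IsSelfAdjoint R := by
    rw [IsSelfAdjoint, hR_def, ← Ring.inverse_star, hc_sa.star_eq]
  have hT_sa : IsSelfAdjoint (s * R * s) := by
    rw [IsSelfAdjoint, star_mul, star_mul, hs_sa.star_eq, hR_sa.star_eq, mul_assoc]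
  have hspec : spectrum ℂ (s * R * s) ⊆ {0} := by
    intro z hz
    by_contra hz0
    simp only [Set.mem_singleton_iff] at hz0
    have hzre := hT_sa.mem_spectrum_eq_re hz
    have hz' : z ∈ spectrum ℂ (R * B) := by
      have h1 : z ∈ spectrum ℂ (s * (R * s)) \ {0} := ⟨by rwa [← mul_assoc], hz0⟩
      rw [spectrum.nonzero_mul_comm] at h1
      have h2 := h1.1
      rwa [mul_assoc, hss] at h2
    have ht := hl z.re⁻¹
    rw [spectrum.notMem_iff] at ht
    have key : algebraMap ℂ (H →L[ℂ] H) (l:ℂ) - (A + ((z.re⁻¹ : ℝ):ℂ) • B)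
        = c * (1 - ((z.re⁻¹ : ℝ):ℂ) • (R * B)) := by
      rw [mul_sub, mul_one, mul_smul_comm, ← mul_assoc, hcR, one_mul, hc_def]
      abel
    rw [key] at ht
    have hw : IsUnit (1 - ((z.re⁻¹ : ℝ):ℂ) • (R * B)) := by
      have h3 := (hc.unit⁻¹).isUnit.mul ht
      rwa [← mul_assoc, IsUnit.val_inv_mul, one_mul] at h3
    have hzinv : ((z.re⁻¹ : ℝ):ℂ) = z⁻¹ := by
      rw [hzre]; push_cast; rfl
    have hfin : IsUnit (algebraMap ℂ (H →L[ℂ] H) z - R * B) := by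
      have h4 : IsUnit (algebraMap ℂ (H →L[ℂ] H) z) :=
        (isUnit_iff_ne_zero.2 hz0).map (algebraMap ℂ (H →L[ℂ] H))
      have h5 := h4.mul hw
      have h6 : algebraMap ℂ (H →L[ℂ] H) z * (1 - ((z.re⁻¹ : ℝ):ℂ) • (R * B))
          = algebraMap ℂ (H →L[ℂ] H) z - R * B := by
        rw [hzinv, mul_sub, mul_one, Algebra.algebraMap_eq_smul_one, smul_mul_assoc, one_mul,
          smul_smul, mul_inv_cancel₀ hz0, one_smul]
      rwa [h6] at h5
    exact (spectrum.notMem_iff.mpr hfin) hz'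
  have hT0 : s * R * s = 0 := by
    have hrad : spectralRadius ℂ (s * R * s) = 0 := by
      rw [spectralRadius]
      refine le_antisymm (iSup₂_le fun k hk => ?_) zero_le
      have := hspec hk
      simp_all
    have hn := hT_sa.spectralRadius_eq_nnnorm
    rw [hrad] at hn
    have : ‖s * R * s‖₊ = 0 := by exact_mod_cast hn.symm
    simpa using this
  calc B * resolvent A (l:ℂ) * B = s * (s * R * s) * s := by
        rw [← hss]; simp only [resolvent]; rw [← hc_def, ← hR_def]; noncomm_ring
    _ = 0 := by rw [hT0]; simp

/-- Let `A`, `B` be bounded self-adjoint operators on a complex Hilbert space with `B`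
nonnegative and `B ≠ 0`. Then the set of real numbers lying in no spectrum
`spec(A + t B)`, `t ∈ ℝ`, is countable. -/
theorem stmt11 {H : Type*} [NormedAddCommGroup H] [InnerProductSpace ℂ H] [CompleteSpace H]
    (A B : H →L[ℂ] H) (hA : IsSelfAdjoint A) (hB : B.IsPositive) (hB0 : B ≠ 0) :
    Set.Countable {l : ℝ | ∀ t : ℝ, (l : ℂ) ∉ spectrum ℂ (A + (t : ℂ) • B)} := by
  obtain ⟨x, hx⟩ : ∃ x : H, B x ≠ 0 := by
    by_contra h
    push_neg at h
    exact hB0 (ContinuousLinearMap.ext fun v => by simpa using h v)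
  set y : H := B x with hy_def
  set S := {l : ℝ | ∀ t : ℝ, (l : ℂ) ∉ spectrum ℂ (A + (t : ℂ) • B)} with hS_def
  -- the function h
  set g : ℝ → ℝ := fun μ => (inner ℂ y (resolvent A (μ:ℂ) y) : ℂ).re with hg_def
  -- derivative of g at points of the resolvent set
  have hderiv : ∀ μ : ℝ, (μ:ℂ) ∈ resolventSet ℂ A →
      HasDerivAt g (inner ℂ y ((-resolvent A (μ:ℂ) ^ 2) y) : ℂ).re μ := by
    intro μ hμ
    have h1 : HasDerivAt (resolvent A) (-resolvent A (μ:ℂ) ^ 2) (μ:ℂ) :=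
      spectrum.hasDerivAt_resolvent hμ
    have h2 : HasDerivAt (fun t : ℝ => resolvent A (t:ℂ)) (-resolvent A (μ:ℂ) ^ 2) μ := by
      have := (h1.hasFDerivAt.restrictScalars ℝ).comp_hasDerivAt μ
        Complex.ofRealCLM.hasDerivAt
      simpa [Function.comp_def] using this
    have h3 : HasDerivAt (fun t : ℝ => resolvent A (t:ℂ) y)
        ((-resolvent A (μ:ℂ) ^ 2) y) μ := by
      have hL := (((ContinuousLinearMap.apply ℂ H y).restrictScalars
        ℝ).hasFDerivAt).comp_hasDerivAt μ h2
      simpa [Function.comp_def] using hL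
    have h4 : HasDerivAt (fun t : ℝ => (inner ℂ y (resolvent A (t:ℂ) y) : ℂ))
        ((inner ℂ y ((-resolvent A (μ:ℂ) ^ 2) y) : ℂ)) μ := by
      have h4' := HasDerivAt.inner ℂ (hasDerivAt_const μ y : HasDerivAt (fun _ : ℝ => y) 0 μ) h3
      simpa using h4'
    exact (Complex.reCLM.hasFDerivAt.comp_hasDerivAt μ h4 :)
  -- negativity of the derivative
  have hneg : ∀ μ : ℝ, (μ:ℂ) ∈ resolventSet ℂ A →
      (inner ℂ y ((-resolvent A (μ:ℂ) ^ 2) y) : ℂ).re < 0 := by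
    intro μ hμ
    set R := resolvent A (μ:ℂ) with hR_def
    have hc_sa : IsSelfAdjoint (algebraMap ℂ (H →L[ℂ] H) (μ:ℂ) - A) := by
      rw [IsSelfAdjoint, star_sub, hA.star_eq, ← algebraMap_star_comm]
      norm_num
    have hR_sa : IsSelfAdjoint R := by
      rw [hR_def, resolvent, IsSelfAdjoint, ← Ring.inverse_star, hc_sa.star_eq]
    have hRy : R y ≠ 0 := by
      intro h0
      have : (algebraMap ℂ (H →L[ℂ] H) (μ:ℂ) - A) * R = 1 :=
        Ring.mul_inverse_cancel _ hμ
      have h1 : ((algebraMap ℂ (H →L[ℂ] H) (μ:ℂ) - A) * R) y = y :=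
        by rw [this]; rfl
      rw [ContinuousLinearMap.mul_apply, h0, map_zero] at h1
      exact hx h1.symm
    have hsym := (ContinuousLinearMap.isSelfAdjoint_iff_isSymmetric.mp hR_sa)
    have key : (inner ℂ y ((R ^ 2) y) : ℂ) = inner ℂ (R y) (R y) := by
      rw [pow_two, ContinuousLinearMap.mul_apply]
      exact (hsym y (R y)).symm
    have hpos : 0 < (inner ℂ (R y) (R y) : ℂ).re := by
      have h7 : (inner ℂ (R y) (R y) : ℂ) = (‖R y‖ : ℂ) ^ 2 := inner_self_eq_norm_sq_to_K (R y)
      rw [h7]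
      have : (0:ℝ) < ‖R y‖ := norm_pos_iff.mpr hRy
      simp only [← Complex.ofReal_pow, Complex.ofReal_re]
      positivity
    have : (inner ℂ y ((-R ^ 2) y) : ℂ) = -(inner ℂ (R y) (R y) : ℂ) := by
      rw [← key]; simp [inner_neg_right]
    rw [this]
    simpa using hpos
  -- g vanishes on S
  have hvanish : ∀ l ∈ S, g l = 0 := by
    intro l hl
    have hBRB := protected_BRB A B hA hB l hl
    have hBsym := (ContinuousLinearMap.isSelfAdjoint_iff_isSymmetric.mp hB.isSelfAdjoint)
    have : (inner ℂ y (resolvent A (l:ℂ) y) : ℂ)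
        = inner ℂ x ((B * resolvent A (l:ℂ) * B) x) := by
      simp only [hy_def, ContinuousLinearMap.mul_apply]
      exact hBsym x (resolvent A (l:ℂ) (B x))
    rw [hg_def]
    simp only [this, hBRB]
    simp
  -- isolation
  refine countable_of_discrete_within fun l hl => ?_
  have hres : (l:ℂ) ∈ resolventSet ℂ A := by
    have h0 := hl 0
    rw [spectrum.notMem_iff] at h0
    rw [spectrum.mem_resolventSet_iff]
    simpa using h0
  have hUopen : IsOpen {μ : ℝ | (μ:ℂ) ∈ resolventSet ℂ A} :=
    (spectrum.isOpen_resolventSet A).preimage Complex.continuous_ofReal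
  obtain ⟨ε, hε, hball⟩ := Metric.isOpen_iff.mp hUopen l hres
  refine ⟨Metric.ball l ε, Metric.isOpen_ball, Metric.mem_ball_self hε, ?_⟩
  have hanti : StrictAntiOn g (Metric.ball l ε) := by
    refine strictAntiOn_of_deriv_neg (convex_ball l ε) ?_ ?_
    · exact fun μ hμ => ((hderiv μ (hball hμ)).continuousAt).continuousWithinAt
    · intro μ hμ
      rw [Metric.isOpen_ball.interior_eq] at hμ
      rw [(hderiv μ (hball hμ)).deriv]
      exact hneg μ (hball hμ)
  rintro μ ⟨hμball, hμS⟩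
  have h1 : g μ = g l := by rw [hvanish μ hμS, hvanish l hl]
  exact hanti.injOn hμball (Metric.mem_ball_self hε) h1
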